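/- For every m ≥ 2, the three side midpoints p_1=(u_1+u_2)/2, p_2=(u_1+u_3)/2, p_3=(u_2+u_3)/2 are non-corner vertices of SG_m, and the Laplacian of the distance-to-corners function at each of them equals Δ_m d_m(p_i) = 2 for i ∈ {1,2,3}. -/

import Mathlib

open scoped Classical BigOperators ENNReal

noncomputable section

/-- Points of the plane. -/
abbrev Pt : Type := ℝ × ℝ

/-- Bottom-left corner `A`. -/
def u1 : Pt := (0, 0)
/-- Top corner `C`. -/
def u2 : Pt := (1/2, Real.sqrt 3 / 2)
/-- Bottom-right corner `B`. -/
def u3 : Pt := (1, 0)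

/-- The three corners of the gasket. -/
def corners : Set Pt := {u1, u2, u3}

/-- Vertex set of the `n`-th Sierpinski gasket approximation graph `SG_n`. -/
def V : ℕ → Set Pt
  | 0 => {u1, u2, u3}
  | n + 1 =>
      (fun p : Pt => (2:ℝ)⁻¹ • p) ''
        (V n ∪ (fun p => u2 + p) '' V n ∪ (fun p => u3 + p) '' V n)

/-- Edge set (as ordered pairs) of `SG_n`. -/
def Ed : ℕ → Set (Pt × Pt)
  | 0 => {(u1, u2), (u2, u3), (u1, u3)}
  | n + 1 =>
      (fun q : Pt × Pt => ((2:ℝ)⁻¹ • q.1, (2:ℝ)⁻¹ • q.2)) ''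
        (Ed n ∪ (fun q : Pt × Pt => (u2 + q.1, u2 + q.2)) '' Ed n ∪
          (fun q : Pt × Pt => (u3 + q.1, u3 + q.2)) '' Ed n)

/-- The `n`-th Sierpinski gasket approximation graph, as a simple graph on the plane
(vertices outside `V n` are isolated). -/
def SG (n : ℕ) : SimpleGraph Pt where
  Adj x y := ((x, y) ∈ Ed n ∨ (y, x) ∈ Ed n) ∧ x ≠ y
  symm := ⟨fun x y h => ⟨h.1.symm, h.2.symm⟩⟩
  loopless := ⟨fun _ h => h.2 rfl⟩

/-- Graph distance on `SG_n`. -/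
def gdist (n : ℕ) (x y : Pt) : ℕ := (SG n).dist x y

/-- `d_n x`: graph distance from `x` to the nearest corner of `SG_n`. -/
def dcorner (n : ℕ) (x : Pt) : ℕ :=
  min (gdist n x u1) (min (gdist n x u2) (gdist n x u3))

/-- Graph Laplacian of `SG_n` at a (non-corner, degree 4) vertex `x`:
`Δ_n f x = 4 f x - ∑_{y ∼ x} f y`. -/
def lap (n : ℕ) (f : Pt → ℝ) (x : Pt) : ℝ :=
  4 * f x - ∑ᶠ (y : Pt) (_ : (SG n).Adj x y), f y

/-- `g : Pt → Pt → ℝ` is the Green function of `SG_n` (stopped at the corners):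
it vanishes whenever one argument is a corner, and for every non-corner vertex `y`
the function `x ↦ g x y` has Laplacian `δ_y` at every non-corner vertex `x`. -/
def IsGreen (n : ℕ) (g : Pt → Pt → ℝ) : Prop :=
  (∀ x y : Pt, x ∈ corners ∨ y ∈ corners → g x y = 0) ∧
    ∀ y ∈ V n, y ∉ corners → ∀ x ∈ V n, x ∉ corners →
      lap n (fun z => g z y) x = if x = y then 1 else 0

/-- `h_n x = ∑_{y ∈ V_{SG_n}} g_n(x,y)`. -/
def hfun (n : ℕ) (g : Pt → Pt → ℝ) (x : Pt) : ℝ := ∑ᶠ y ∈ V n, g x y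

/-- Green convolution `(g_n * σ)(x) = ∑_{y ∈ V_{SG_n}} g_n(x,y) σ(y)`. -/
def conv (n : ℕ) (g : Pt → Pt → ℝ) (σ : Pt → ℕ) (x : Pt) : ℝ :=
  ∑ᶠ y ∈ V n, g x y * (σ y : ℝ)

/-- Midpoint of side `AB`. -/
def mAB : Pt := (2:ℝ)⁻¹ • (u1 + u3)
/-- Midpoint of side `BC`. -/
def mBC : Pt := (2:ℝ)⁻¹ • (u3 + u2)
/-- Midpoint of side `CA`. -/
def mCA : Pt := (2:ℝ)⁻¹ • (u2 + u1)

/-- The recursively defined sandpile configurations `M_n(a,b,c)` on `SG_n`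
(value `0` off the vertex set, and junk at level `0`). -/
def M : ℕ → ℕ → ℕ → ℕ → Pt → ℕ
  | 0, _, _, _, _ => 0
  | 1, a, b, c, x =>
      if x = u1 then a else if x = u3 then b else if x = u2 then c
      else if x = mAB then 3 else if x = mBC then 2 else if x = mCA then 3 else 0
  | n + 2, a, b, c, x =>
      if x = u1 then a else if x = u3 then b else if x = u2 then c
      else if x = mAB then 3 else if x = mBC then 2 else if x = mCA then 3
      else if (2:ℝ) • x ∈ V (n+1) then M (n+1) a 3 3 ((2:ℝ) • x)
      else if (2:ℝ) • x - u3 ∈ V (n+1) then M (n+1) 3 b 2 ((2:ℝ) • x - u3)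
      else if (2:ℝ) • x - u2 ∈ V (n+1) then M (n+1) 3 2 c ((2:ℝ) • x - u2)
      else 0

/-- Centroid of the three corners. -/
def ctr : Pt := (3:ℝ)⁻¹ • (u1 + u2 + u3)

/-- Rotation of the plane by 120° counterclockwise about the centroid. -/
def rotccw (x : Pt) : Pt :=
  (ctr.1 - (x.1 - ctr.1) / 2 - Real.sqrt 3 / 2 * (x.2 - ctr.2),
   ctr.2 + Real.sqrt 3 / 2 * (x.1 - ctr.1) - (x.2 - ctr.2) / 2)

/-- Rotation of the plane by 120° clockwise about the centroid. -/
def rotcw (x : Pt) : Pt :=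
  (ctr.1 - (x.1 - ctr.1) / 2 + Real.sqrt 3 / 2 * (x.2 - ctr.2),
   ctr.2 - Real.sqrt 3 / 2 * (x.1 - ctr.1) - (x.2 - ctr.2) / 2)

/-- The sandpile identity `id_n` on `SG_n` for `n ≥ 2` (junk `0` for `n ≤ 1` and off the
vertex set): value `2` at the corners and side midpoints, the configuration `M_{n-1}(2,2,2)`
rescaled on the bottom-left copy, its clockwise 120° rotation on the top copy, and its
counterclockwise 120° rotation on the bottom-right copy. -/
def sandId : ℕ → Pt → ℕ
  | 0, _ => 0
  | 1, _ => 0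
  | m + 2, x =>
      if x = u1 ∨ x = u2 ∨ x = u3 ∨ x = mAB ∨ x = mBC ∨ x = mCA then 2
      else if (2:ℝ) • x ∈ V (m+1) then M (m+1) 2 2 2 ((2:ℝ) • x)
      else if (2:ℝ) • x - u2 ∈ V (m+1) then M (m+1) 2 2 2 (rotccw ((2:ℝ) • x - u2))
      else if (2:ℝ) • x - u3 ∈ V (m+1) then M (m+1) 2 2 2 (rotcw ((2:ℝ) • x - u3))
      else 0

/-- `V_* = ⋃_n V_{SG_n}`. -/
def Vstar : Set Pt := ⋃ n, V n

/-- The Sierpinski gasket: the closure of `V_*` in the plane. -/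
def SGset : Set Pt := closure Vstar

/-- Euclidean distance on the plane. -/
def eud (x y : Pt) : ℝ := Real.sqrt ((x.1 - y.1) ^ 2 + (x.2 - y.2) ^ 2)

/-- The point of `V n` nearest to `x` in Euclidean distance, ties resolved by taking the
rightmost (largest first coordinate) minimizer. -/
def nearest (n : ℕ) (x : Pt) : Pt :=
  if h : ∃ y ∈ V n, (∀ z ∈ V n, eud x y ≤ eud x z) ∧
      ∀ z ∈ V n, eud x z = eud x y → z.1 ≤ y.1
  then h.choose else x

/-- Piecewise constant continuation `f^▲` of a function on `V n` to the gasket. -/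
def ext (n : ℕ) (f : Pt → ℝ) (x : Pt) : ℝ := f (nearest n x)

/-- Arc length (total variation w.r.t. the Euclidean distance) of a curve
`γ : [0,1] → ℝ²`. -/
def pathLen (γ : ℝ → Pt) : ℝ≥0∞ :=
  ⨆ p : ℕ × {u : ℕ → ℝ // Monotone u ∧ ∀ i, u i ∈ Set.Icc (0:ℝ) 1},
    ∑ i ∈ Finset.range p.1, ENNReal.ofReal (eud (γ (p.2.1 (i + 1))) (γ (p.2.1 i)))

/-- Intrinsic (shortest-path) distance between `x` and `y` through the gasket. -/
def intrinsicD (x y : Pt) : ℝ≥0∞ :=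
  ⨅ (γ : ℝ → Pt) (_ : ContinuousOn γ (Set.Icc 0 1)) (_ : γ 0 = x) (_ : γ 1 = y)
    (_ : Set.MapsTo γ (Set.Icc 0 1) SGset), pathLen γ

/-- `d(x)`: intrinsic shortest-path distance in the gasket from `x` to the nearest corner. -/
def dSG (x : Pt) : ℝ :=
  (min (intrinsicD x u1) (min (intrinsicD x u2) (intrinsicD x u3))).toReal


namespace SGAux

open SimpleGraph

local notation "√3" => Real.sqrt 3

lemma h3 : √3 * √3 = 3 := Real.mul_self_sqrt (by norm_num)
lemma s3_pos : 0 < √3 := Real.sqrt_pos.mpr (by norm_num)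
lemma s3_nonneg : 0 ≤ √3 := le_of_lt s3_pos

/-! ### Point arithmetic helpers -/

lemma pt_ext {a b : Pt} (h1 : a.1 = b.1) (h2 : a.2 = b.2) : a = b := Prod.ext_iff.mpr ⟨h1, h2⟩

lemma half_eq {a b : Pt} (h : (2:ℝ)⁻¹ • a = b) : a = (2:ℝ) • b := by
  rw [← h, smul_smul]; norm_num

lemma smul_fst (c : ℝ) (x : Pt) : (c • x).1 = c * x.1 := by rw [Prod.smul_fst, smul_eq_mul]
lemma smul_snd (c : ℝ) (x : Pt) : (c • x).2 = c * x.2 := by rw [Prod.smul_snd, smul_eq_mul]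

/-- simp set for point coordinates -/
lemma u1_1 : u1.1 = 0 := rfl
lemma u1_2 : u1.2 = 0 := rfl
lemma u2_1 : u2.1 = 1/2 := rfl
lemma u2_2 : u2.2 = √3 / 2 := rfl
lemma u3_1 : u3.1 = 1 := rfl
lemma u3_2 : u3.2 = 0 := rfl

/-! ### V and Ed recursion -/

lemma V_zero : V 0 = {u1, u2, u3} := rfl
lemma V_succ (n : ℕ) : V (n+1) =
    (fun p : Pt => (2:ℝ)⁻¹ • p) ''
      (V n ∪ (fun p => u2 + p) '' V n ∪ (fun p => u3 + p) '' V n) := rfl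
lemma Ed_zero : Ed 0 = {(u1, u2), (u2, u3), (u1, u3)} := rfl
lemma Ed_succ (n : ℕ) : Ed (n+1) =
    (fun q : Pt × Pt => ((2:ℝ)⁻¹ • q.1, (2:ℝ)⁻¹ • q.2)) ''
      (Ed n ∪ (fun q : Pt × Pt => (u2 + q.1, u2 + q.2)) '' Ed n ∪
        (fun q : Pt × Pt => (u3 + q.1, u3 + q.2)) '' Ed n) := rfl

lemma mem_V_left {n : ℕ} {x : Pt} (h : x ∈ V n) : (2:ℝ)⁻¹ • x ∈ V (n+1) :=
  ⟨x, Or.inl (Or.inl h), rfl⟩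
lemma mem_V_top {n : ℕ} {x : Pt} (h : x ∈ V n) : (2:ℝ)⁻¹ • (u2 + x) ∈ V (n+1) :=
  ⟨u2 + x, Or.inl (Or.inr ⟨x, h, rfl⟩), rfl⟩
lemma mem_V_right {n : ℕ} {x : Pt} (h : x ∈ V n) : (2:ℝ)⁻¹ • (u3 + x) ∈ V (n+1) :=
  ⟨u3 + x, Or.inr ⟨x, h, rfl⟩, rfl⟩

lemma ed_left {n : ℕ} {a b : Pt} (h : (a, b) ∈ Ed n) :
    ((2:ℝ)⁻¹ • a, (2:ℝ)⁻¹ • b) ∈ Ed (n+1) := ⟨(a, b), Or.inl (Or.inl h), rfl⟩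
lemma ed_top {n : ℕ} {a b : Pt} (h : (a, b) ∈ Ed n) :
    ((2:ℝ)⁻¹ • (u2 + a), (2:ℝ)⁻¹ • (u2 + b)) ∈ Ed (n+1) :=
  ⟨(u2 + a, u2 + b), Or.inl (Or.inr ⟨(a, b), h, rfl⟩), rfl⟩
lemma ed_right {n : ℕ} {a b : Pt} (h : (a, b) ∈ Ed n) :
    ((2:ℝ)⁻¹ • (u3 + a), (2:ℝ)⁻¹ • (u3 + b)) ∈ Ed (n+1) :=
  ⟨(u3 + a, u3 + b), Or.inr ⟨(a, b), h, rfl⟩, rfl⟩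

lemma ed_cases {n : ℕ} {u v : Pt} (h : (u, v) ∈ Ed (n+1)) :
    ∃ a b, (a, b) ∈ Ed n ∧
      ((u = (2:ℝ)⁻¹ • a ∧ v = (2:ℝ)⁻¹ • b) ∨
       (u = (2:ℝ)⁻¹ • (u2 + a) ∧ v = (2:ℝ)⁻¹ • (u2 + b)) ∨
       (u = (2:ℝ)⁻¹ • (u3 + a) ∧ v = (2:ℝ)⁻¹ • (u3 + b))) := by
  rw [Ed_succ] at h
  rcases h with ⟨⟨a0, b0⟩, hm, he⟩
  rcases Prod.mk.injEq .. ▸ he with ⟨h1, h2⟩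
  rcases hm with (hm | ⟨⟨a1, b1⟩, hm1, he1⟩) | ⟨⟨a1, b1⟩, hm1, he1⟩
  · exact ⟨a0, b0, hm, Or.inl ⟨h1.symm, h2.symm⟩⟩
  · rcases Prod.mk.injEq .. ▸ he1 with ⟨g1, g2⟩
    exact ⟨a1, b1, hm1, Or.inr (Or.inl ⟨by rw [← h1, ← g1], by rw [← h2, ← g2]⟩)⟩
  · rcases Prod.mk.injEq .. ▸ he1 with ⟨g1, g2⟩
    exact ⟨a1, b1, hm1, Or.inr (Or.inr ⟨by rw [← h1, ← g1], by rw [← h2, ← g2]⟩)⟩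

lemma v_cases {n : ℕ} {x : Pt} (h : x ∈ V (n+1)) :
    ∃ y ∈ V n, x = (2:ℝ)⁻¹ • y ∨ x = (2:ℝ)⁻¹ • (u2 + y) ∨ x = (2:ℝ)⁻¹ • (u3 + y) := by
  rw [V_succ] at h
  rcases h with ⟨y0, hm, he⟩
  rcases hm with (hm | ⟨y1, hm1, he1⟩) | ⟨y1, hm1, he1⟩
  · exact ⟨y0, hm, Or.inl he.symm⟩
  · exact ⟨y1, hm1, Or.inr (Or.inl (by rw [← he, ← he1]))⟩
  · exact ⟨y1, hm1, Or.inr (Or.inr (by rw [← he, ← he1]))⟩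

/-! ### Triangle bound for edge endpoints -/

def inT (x : Pt) : Prop := 0 ≤ x.2 ∧ x.2 ≤ √3 * x.1 ∧ x.2 ≤ √3 * (1 - x.1)

lemma inT_u1 : inT u1 := by
  refine ⟨?_, ?_, ?_⟩ <;> norm_num [u1_1, u1_2, s3_nonneg]
lemma inT_u2 : inT u2 := by
  refine ⟨by rw [u2_2]; positivity, ?_, ?_⟩ <;> rw [u2_1, u2_2] <;> nlinarith [s3_nonneg]
lemma inT_u3 : inT u3 := by
  refine ⟨le_refl _, ?_, ?_⟩ <;> rw [u3_1, u3_2] <;> nlinarith [s3_nonneg]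

lemma inT_half {x : Pt} (h : inT x) : inT ((2:ℝ)⁻¹ • x) := by
  obtain ⟨a, b, c⟩ := h
  refine ⟨?_, ?_, ?_⟩ <;> simp only [smul_fst, smul_snd] <;> nlinarith [s3_nonneg]
lemma inT_top {x : Pt} (h : inT x) : inT ((2:ℝ)⁻¹ • (u2 + x)) := by
  obtain ⟨a, b, c⟩ := h
  refine ⟨?_, ?_, ?_⟩ <;>
    simp only [smul_fst, smul_snd, Prod.fst_add, Prod.snd_add, u2_1, u2_2] <;>
    nlinarith [s3_nonneg]
lemma inT_right {x : Pt} (h : inT x) : inT ((2:ℝ)⁻¹ • (u3 + x)) := by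
  obtain ⟨a, b, c⟩ := h
  refine ⟨?_, ?_, ?_⟩ <;>
    simp only [smul_fst, smul_snd, Prod.fst_add, Prod.snd_add, u3_1, u3_2] <;>
    nlinarith [s3_nonneg]

lemma ed_inT : ∀ n (a b : Pt), (a, b) ∈ Ed n → inT a ∧ inT b := by
  intro n
  induction n with
  | zero =>
    intro a b h
    simp only [Ed_zero, Set.mem_insert_iff, Set.mem_singleton_iff, Prod.mk.injEq] at h
    rcases h with ⟨rfl, rfl⟩ | ⟨rfl, rfl⟩ | ⟨rfl, rfl⟩
    · exact ⟨inT_u1, inT_u2⟩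
    · exact ⟨inT_u2, inT_u3⟩
    · exact ⟨inT_u1, inT_u3⟩
  | succ n ih =>
    intro a b h
    obtain ⟨a0, b0, h0, hc⟩ := ed_cases h
    obtain ⟨ha0, hb0⟩ := ih a0 b0 h0
    rcases hc with ⟨rfl, rfl⟩ | ⟨rfl, rfl⟩ | ⟨rfl, rfl⟩
    · exact ⟨inT_half ha0, inT_half hb0⟩
    · exact ⟨inT_top ha0, inT_top hb0⟩
    · exact ⟨inT_right ha0, inT_right hb0⟩

/-! ### Hexagonal seminorm lower bound -/

def L (x : Pt) : ℝ := max |√3 * x.1 + x.2| (max |2 * x.2| |√3 * x.1 - x.2|)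

lemma L_comp1 (x : Pt) : |√3 * x.1 + x.2| ≤ L x := le_max_left _ _
lemma L_comp2 (x : Pt) : |2 * x.2| ≤ L x := le_trans (le_max_left _ _) (le_max_right _ _)
lemma L_comp3 (x : Pt) : |√3 * x.1 - x.2| ≤ L x := le_trans (le_max_right _ _) (le_max_right _ _)

lemma L_le {x : Pt} {c : ℝ} (h1 : |√3 * x.1 + x.2| ≤ c) (h2 : |2 * x.2| ≤ c)
    (h3 : |√3 * x.1 - x.2| ≤ c) : L x ≤ c := max_le h1 (max_le h2 h3)

lemma L_tri (x y : Pt) : L (x + y) ≤ L x + L y := by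
  refine L_le ?_ ?_ ?_
  · calc |√3 * (x + y).1 + (x + y).2| = |(√3 * x.1 + x.2) + (√3 * y.1 + y.2)| := by
          rw [Prod.fst_add, Prod.snd_add]; ring_nf
    _ ≤ |√3 * x.1 + x.2| + |√3 * y.1 + y.2| := abs_add_le _ _
    _ ≤ L x + L y := add_le_add (L_comp1 x) (L_comp1 y)
  · calc |2 * (x + y).2| = |2 * x.2 + 2 * y.2| := by rw [Prod.snd_add]; ring_nf
    _ ≤ |2 * x.2| + |2 * y.2| := abs_add_le _ _
    _ ≤ L x + L y := add_le_add (L_comp2 x) (L_comp2 y)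
  · calc |√3 * (x + y).1 - (x + y).2| = |(√3 * x.1 - x.2) + (√3 * y.1 - y.2)| := by
          rw [Prod.fst_add, Prod.snd_add]; ring_nf
    _ ≤ |√3 * x.1 - x.2| + |√3 * y.1 - y.2| := abs_add_le _ _
    _ ≤ L x + L y := add_le_add (L_comp3 x) (L_comp3 y)

lemma L_sub_tri (x y z : Pt) : L (x - z) ≤ L (x - y) + L (y - z) := by
  have : x - z = (x - y) + (y - z) := by abel
  rw [this]; exact L_tri _ _

lemma L_sub_comm (x y : Pt) : L (x - y) = L (y - x) := by
  unfold L
  rw [show √3 * (x - y).1 + (x - y).2 = -(√3 * (y - x).1 + (y - x).2) by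
        rw [Prod.fst_sub, Prod.fst_sub, Prod.snd_sub, Prod.snd_sub]; ring,
     show 2 * (x - y).2 = -(2 * (y - x).2) by
        rw [Prod.snd_sub, Prod.snd_sub]; ring,
     show √3 * (x - y).1 - (x - y).2 = -(√3 * (y - x).1 - (y - x).2) by
        rw [Prod.fst_sub, Prod.fst_sub, Prod.snd_sub, Prod.snd_sub]; ring,
     abs_neg, abs_neg, abs_neg]

lemma L_half (x : Pt) : L ((2:ℝ)⁻¹ • x) = 2⁻¹ * L x := by
  have e1 : |√3 * ((2:ℝ)⁻¹ • x).1 + ((2:ℝ)⁻¹ • x).2| = 2⁻¹ * |√3 * x.1 + x.2| := by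
    rw [smul_fst, smul_snd, show √3 * (2⁻¹ * x.1) + 2⁻¹ * x.2 = 2⁻¹ * (√3 * x.1 + x.2) by ring,
      abs_mul, abs_of_pos (by norm_num : (0:ℝ) < 2⁻¹)]
  have e2 : |2 * ((2:ℝ)⁻¹ • x).2| = 2⁻¹ * |2 * x.2| := by
    rw [smul_snd, show 2 * (2⁻¹ * x.2) = 2⁻¹ * (2 * x.2) by ring,
      abs_mul, abs_of_pos (by norm_num : (0:ℝ) < 2⁻¹)]
  have e3 : |√3 * ((2:ℝ)⁻¹ • x).1 - ((2:ℝ)⁻¹ • x).2| = 2⁻¹ * |√3 * x.1 - x.2| := by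
    rw [smul_fst, smul_snd, show √3 * (2⁻¹ * x.1) - 2⁻¹ * x.2 = 2⁻¹ * (√3 * x.1 - x.2) by ring,
      abs_mul, abs_of_pos (by norm_num : (0:ℝ) < 2⁻¹)]
  unfold L
  rw [e1, e2, e3, ← mul_max_of_nonneg _ _ (by norm_num : (0:ℝ) ≤ 2⁻¹),
    ← mul_max_of_nonneg _ _ (by norm_num : (0:ℝ) ≤ 2⁻¹)]

lemma L_edge : ∀ n (a b : Pt), (a, b) ∈ Ed n → L (a - b) ≤ √3 * (2⁻¹:ℝ)^n := by
  intro n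
  induction n with
  | zero =>
    intro a b h
    have habs : ∀ c : ℝ, 0 ≤ c → |(-c)| = c := fun c hc => by rw [abs_neg, abs_of_nonneg hc]
    simp only [Ed_zero, Set.mem_insert_iff, Set.mem_singleton_iff, Prod.mk.injEq] at h
    rcases h with ⟨rfl, rfl⟩ | ⟨rfl, rfl⟩ | ⟨rfl, rfl⟩ <;>
      refine pow_zero (2⁻¹:ℝ) ▸ (mul_one √3) ▸ L_le ?_ ?_ ?_
    · rw [show √3 * (u1 - u2).1 + (u1 - u2).2 = -√3 by
        rw [Prod.fst_sub, Prod.snd_sub, u1_1, u1_2, u2_1, u2_2]; ring]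
      rw [abs_neg, abs_of_nonneg s3_nonneg]; nlinarith [s3_nonneg]
    · rw [show 2 * (u1 - u2).2 = -√3 by
        rw [Prod.snd_sub, u1_2, u2_2]; ring]
      rw [abs_neg, abs_of_nonneg s3_nonneg]; nlinarith [s3_nonneg]
    · rw [show √3 * (u1 - u2).1 - (u1 - u2).2 = 0 by
        rw [Prod.fst_sub, Prod.snd_sub, u1_1, u1_2, u2_1, u2_2]; ring]
      simpa using s3_nonneg
    · rw [show √3 * (u2 - u3).1 + (u2 - u3).2 = 0 by
        rw [Prod.fst_sub, Prod.snd_sub, u2_1, u2_2, u3_1, u3_2]; ring]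
      simpa using s3_nonneg
    · rw [show 2 * (u2 - u3).2 = √3 by rw [Prod.snd_sub, u2_2, u3_2]; ring]
      rw [abs_of_nonneg s3_nonneg]; nlinarith [s3_nonneg]
    · rw [show √3 * (u2 - u3).1 - (u2 - u3).2 = -√3 by
        rw [Prod.fst_sub, Prod.snd_sub, u2_1, u2_2, u3_1, u3_2]; ring]
      rw [abs_neg, abs_of_nonneg s3_nonneg]; nlinarith [s3_nonneg]
    · rw [show √3 * (u1 - u3).1 + (u1 - u3).2 = -√3 by
        rw [Prod.fst_sub, Prod.snd_sub, u1_1, u1_2, u3_1, u3_2]; ring]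
      rw [abs_neg, abs_of_nonneg s3_nonneg]; nlinarith [s3_nonneg]
    · rw [show 2 * (u1 - u3).2 = 0 by rw [Prod.snd_sub, u1_2, u3_2]; ring]
      simpa using s3_nonneg
    · rw [show √3 * (u1 - u3).1 - (u1 - u3).2 = -√3 by
        rw [Prod.fst_sub, Prod.snd_sub, u1_1, u1_2, u3_1, u3_2]; ring]
      rw [abs_neg, abs_of_nonneg s3_nonneg]; nlinarith [s3_nonneg]
  | succ n ih =>
    intro a b h
    obtain ⟨a0, b0, h0, hc⟩ := ed_cases h
    have key : a - b = (2:ℝ)⁻¹ • (a0 - b0) := by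
      rcases hc with ⟨rfl, rfl⟩ | ⟨rfl, rfl⟩ | ⟨rfl, rfl⟩ <;>
        rw [← smul_sub] <;> congr 1 <;> abel
    rw [key, L_half]
    have := ih a0 b0 h0
    calc 2⁻¹ * L (a0 - b0) ≤ 2⁻¹ * (√3 * (2⁻¹:ℝ)^n) := by linarith
    _ = √3 * (2⁻¹:ℝ)^(n+1) := by ring

lemma adj_iff {n : ℕ} {x y : Pt} :
    (SG n).Adj x y ↔ ((x, y) ∈ Ed n ∨ (y, x) ∈ Ed n) ∧ x ≠ y := Iff.rfl

lemma L_le_walk {n : ℕ} {x y : Pt} (w : (SG n).Walk x y) :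
    L (x - y) ≤ w.length * (√3 * (2⁻¹:ℝ)^n) := by
  induction w with
  | nil =>
    simp only [SimpleGraph.Walk.length_nil, Nat.cast_zero, zero_mul, sub_self]
    have : L 0 ≤ √3 * (2⁻¹:ℝ)^n * 0 := by
      unfold L
      simp [Prod.fst_zero, Prod.snd_zero]
    simpa using this
  | @cons a b c hadj w ih =>
    have hedge : L (a - b) ≤ √3 * (2⁻¹:ℝ)^n := by
      rcases hadj.1 with h | h
      · exact L_edge n a b h
      · rw [L_sub_comm]; exact L_edge n b a h
    calc L (a - c) ≤ L (a - b) + L (b - c) := L_sub_tri a b c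
    _ ≤ √3 * (2⁻¹:ℝ)^n + w.length * (√3 * (2⁻¹:ℝ)^n) := add_le_add hedge ih
    _ = (w.length + 1) * (√3 * (2⁻¹:ℝ)^n) := by ring
    _ = (SimpleGraph.Walk.cons hadj w).length * (√3 * (2⁻¹:ℝ)^n) := by
        rw [SimpleGraph.Walk.length_cons]; push_cast; ring

lemma dist_ge_of_L {n : ℕ} {x y : Pt} (h : (SG n).Reachable x y) (c : ℕ)
    (hc : (c : ℝ) * (√3 * (2⁻¹:ℝ)^n) ≤ L (x - y)) : c ≤ (SG n).dist x y := by
  obtain ⟨w, hw⟩ := h.exists_walk_length_eq_dist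
  have hL := L_le_walk w
  rw [hw] at hL
  have hu : (0:ℝ) < √3 * (2⁻¹:ℝ)^n := by positivity
  have : (c : ℝ) ≤ ((SG n).dist x y : ℝ) :=
    le_of_mul_le_mul_right (le_trans hc hL) hu
  exact_mod_cast this


/-! ### Corner facts -/

lemma u1_ne_u2 : u1 ≠ u2 := by
  intro h; have := congrArg Prod.fst h; rw [u1_1, u2_1] at this; norm_num at this
lemma u1_ne_u3 : u1 ≠ u3 := by
  intro h; have := congrArg Prod.fst h; rw [u1_1, u3_1] at this; norm_num at this
lemma u2_ne_u3 : u2 ≠ u3 := by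
  intro h; have := congrArg Prod.fst h; rw [u2_1, u3_1] at this; norm_num at this

lemma adj0_12 : (SG 0).Adj u1 u2 := ⟨Or.inl (Or.inl rfl), u1_ne_u2⟩
lemma adj0_13 : (SG 0).Adj u1 u3 := ⟨Or.inl (Or.inr (Or.inr rfl)), u1_ne_u3⟩
lemma adj0_23 : (SG 0).Adj u2 u3 := ⟨Or.inl (Or.inr (Or.inl rfl)), u2_ne_u3⟩

/-! ### Graph homomorphisms between levels -/

def homL (n : ℕ) : SG n →g SG (n+1) where
  toFun := fun x => (2:ℝ)⁻¹ • x
  map_rel' := by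
    intro a b h
    constructor
    · rcases h.1 with h' | h'
      · exact Or.inl (ed_left h')
      · exact Or.inr (ed_left h')
    · intro he
      exact h.2 (smul_right_injective Pt (by norm_num : (2:ℝ)⁻¹ ≠ 0) he)

def homT (n : ℕ) : SG n →g SG (n+1) where
  toFun := fun x => (2:ℝ)⁻¹ • (u2 + x)
  map_rel' := by
    intro a b h
    constructor
    · rcases h.1 with h' | h'
      · exact Or.inl (ed_top h')
      · exact Or.inr (ed_top h')
    · intro he
      exact h.2 (add_left_cancel
        (smul_right_injective Pt (by norm_num : (2:ℝ)⁻¹ ≠ 0) he))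

def homR (n : ℕ) : SG n →g SG (n+1) where
  toFun := fun x => (2:ℝ)⁻¹ • (u3 + x)
  map_rel' := by
    intro a b h
    constructor
    · rcases h.1 with h' | h'
      · exact Or.inl (ed_right h')
      · exact Or.inr (ed_right h')
    · intro he
      exact h.2 (add_left_cancel
        (smul_right_injective Pt (by norm_num : (2:ℝ)⁻¹ ≠ 0) he))

lemma walk_map_left {n : ℕ} {x y x' y' : Pt} (w : (SG n).Walk x y)
    (hx : (2:ℝ)⁻¹ • x = x') (hy : (2:ℝ)⁻¹ • y = y') :
    ∃ w' : (SG (n+1)).Walk x' y', w'.length = w.length :=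
  ⟨(w.map (homL n)).copy hx hy,
    (SimpleGraph.Walk.length_copy _ _ _).trans (SimpleGraph.Walk.length_map _ _)⟩

lemma walk_map_top {n : ℕ} {x y x' y' : Pt} (w : (SG n).Walk x y)
    (hx : (2:ℝ)⁻¹ • (u2 + x) = x') (hy : (2:ℝ)⁻¹ • (u2 + y) = y') :
    ∃ w' : (SG (n+1)).Walk x' y', w'.length = w.length :=
  ⟨(w.map (homT n)).copy hx hy,
    (SimpleGraph.Walk.length_copy _ _ _).trans (SimpleGraph.Walk.length_map _ _)⟩

lemma walk_map_right {n : ℕ} {x y x' y' : Pt} (w : (SG n).Walk x y)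
    (hx : (2:ℝ)⁻¹ • (u3 + x) = x') (hy : (2:ℝ)⁻¹ • (u3 + y) = y') :
    ∃ w' : (SG (n+1)).Walk x' y', w'.length = w.length :=
  ⟨(w.map (homR n)).copy hx hy,
    (SimpleGraph.Walk.length_copy _ _ _).trans (SimpleGraph.Walk.length_map _ _)⟩

/-! ### Point identities -/

lemma P1 : (2:ℝ)⁻¹ • u1 = u1 := by
  refine pt_ext ?_ ?_ <;> simp [smul_fst, smul_snd, u1_1, u1_2]
lemma P2 : (2:ℝ)⁻¹ • (u2 + u1) = (2:ℝ)⁻¹ • u2 := by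
  refine pt_ext ?_ ?_ <;>
    simp only [smul_fst, smul_snd, Prod.fst_add, Prod.snd_add, u1_1, u1_2] <;> ring
lemma P3 : (2:ℝ)⁻¹ • (u2 + u2) = u2 := by
  refine pt_ext ?_ ?_ <;>
    simp only [smul_fst, smul_snd, Prod.fst_add, Prod.snd_add, u2_1, u2_2] <;> ring
lemma P4 : (2:ℝ)⁻¹ • (u3 + u1) = (2:ℝ)⁻¹ • u3 := by
  refine pt_ext ?_ ?_ <;>
    simp only [smul_fst, smul_snd, Prod.fst_add, Prod.snd_add, u1_1, u1_2] <;> ring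
lemma P5 : (2:ℝ)⁻¹ • (u3 + u3) = u3 := by
  refine pt_ext ?_ ?_ <;>
    simp only [smul_fst, smul_snd, Prod.fst_add, Prod.snd_add, u3_1, u3_2] <;> ring
lemma P6 : (2:ℝ)⁻¹ • (u3 + u2) = (2:ℝ)⁻¹ • (u2 + u3) := by
  refine pt_ext ?_ ?_ <;>
    simp only [smul_fst, smul_snd, Prod.fst_add, Prod.snd_add] <;> ring

lemma Pa (k : ℕ) : (2:ℝ)⁻¹ • (u2 + (1 - (2⁻¹:ℝ)^k) • u2) = (1 - (2⁻¹:ℝ)^(k+1)) • u2 := by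
  refine pt_ext ?_ ?_ <;>
    simp only [smul_fst, smul_snd, Prod.fst_add, Prod.snd_add] <;> ring
lemma Pb (k : ℕ) : (2:ℝ)⁻¹ • (u2 + (u2 + (2⁻¹:ℝ)^k • (u3 - u2))) =
    u2 + (2⁻¹:ℝ)^(k+1) • (u3 - u2) := by
  refine pt_ext ?_ ?_ <;>
    simp only [smul_fst, smul_snd, Prod.fst_add, Prod.snd_add, Prod.fst_sub, Prod.snd_sub,
      u2_1, u2_2, u3_1, u3_2] <;> ring
lemma Pa' (k : ℕ) : (2:ℝ)⁻¹ • ((2⁻¹:ℝ)^k • u2) = (2⁻¹:ℝ)^(k+1) • u2 := by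
  refine pt_ext ?_ ?_ <;> simp only [smul_fst, smul_snd] <;> ring
lemma Pb' (k : ℕ) : (2:ℝ)⁻¹ • ((2⁻¹:ℝ)^k • u3) = (2⁻¹:ℝ)^(k+1) • u3 := by
  refine pt_ext ?_ ?_ <;> simp only [smul_fst, smul_snd] <;> ring

lemma Qa0 : (1 - (2⁻¹:ℝ)^0) • u2 = u1 := by
  refine pt_ext ?_ ?_ <;>
    simp [smul_fst, smul_snd, u1_1, u1_2, u2_1, u2_2]
lemma Qb0 : u2 + (2⁻¹:ℝ)^0 • (u3 - u2) = u3 := by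
  refine pt_ext ?_ ?_ <;>
    simp only [smul_fst, smul_snd, Prod.fst_add, Prod.snd_add, Prod.fst_sub, Prod.snd_sub,
      u2_1, u2_2, u3_1, u3_2, pow_zero] <;> ring
lemma Qa0' : (2⁻¹:ℝ)^0 • u2 = u2 := by rw [pow_zero, one_smul]
lemma Qb0' : (2⁻¹:ℝ)^0 • u3 = u3 := by rw [pow_zero, one_smul]

lemma two_pow_succ (k : ℕ) : 2^(k+1) = 2^k + 2^k := by ring

/-! ### Walk upper bounds -/

lemma W1 : ∀ k, ∃ w : (SG k).Walk u1 u2, w.length ≤ 2^k := by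
  intro k; induction k with
  | zero => exact ⟨SimpleGraph.Walk.cons adj0_12 SimpleGraph.Walk.nil, by simp⟩
  | succ k ih =>
    obtain ⟨w, hw⟩ := ih
    obtain ⟨w1, hw1⟩ := walk_map_left w P1 rfl
    obtain ⟨w2, hw2⟩ := walk_map_top w P2 P3
    exact ⟨w1.append w2, by
      rw [SimpleGraph.Walk.length_append, hw1, hw2, two_pow_succ]; omega⟩

lemma W2 : ∀ k, ∃ w : (SG k).Walk u1 u3, w.length ≤ 2^k := by
  intro k; induction k with
  | zero => exact ⟨SimpleGraph.Walk.cons adj0_13 SimpleGraph.Walk.nil, by simp⟩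
  | succ k ih =>
    obtain ⟨w, hw⟩ := ih
    obtain ⟨w1, hw1⟩ := walk_map_left w P1 rfl
    obtain ⟨w2, hw2⟩ := walk_map_right w P4 P5
    exact ⟨w1.append w2, by
      rw [SimpleGraph.Walk.length_append, hw1, hw2, two_pow_succ]; omega⟩

lemma W3 : ∀ k, ∃ w : (SG k).Walk u2 u3, w.length ≤ 2^k := by
  intro k; induction k with
  | zero => exact ⟨SimpleGraph.Walk.cons adj0_23 SimpleGraph.Walk.nil, by simp⟩
  | succ k ih =>
    obtain ⟨w, hw⟩ := ih
    obtain ⟨w1, hw1⟩ := walk_map_top w P3 rfl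
    obtain ⟨w2, hw2⟩ := walk_map_right w (P6.trans rfl) P5
    exact ⟨w1.append w2, by
      rw [SimpleGraph.Walk.length_append, hw1, hw2, two_pow_succ]; omega⟩

lemma Wa : ∀ k, ∃ w : (SG k).Walk ((1 - (2⁻¹:ℝ)^k) • u2) u1, w.length < 2^k := by
  intro k; induction k with
  | zero => exact ⟨SimpleGraph.Walk.nil.copy Qa0.symm rfl, by simp⟩
  | succ k ih =>
    obtain ⟨w, hw⟩ := ih
    obtain ⟨w1, hw1⟩ := walk_map_top w (Pa k) P2
    obtain ⟨wc, hwc⟩ := W1 k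
    obtain ⟨w2, hw2⟩ := walk_map_left wc.reverse rfl P1
    exact ⟨w1.append w2, by
      rw [SimpleGraph.Walk.length_append, hw1, hw2, SimpleGraph.Walk.length_reverse,
        two_pow_succ]; omega⟩

lemma Wb : ∀ k, ∃ w : (SG k).Walk (u2 + (2⁻¹:ℝ)^k • (u3 - u2)) u1, w.length ≤ 2^k := by
  intro k; induction k with
  | zero =>
    exact ⟨(SimpleGraph.Walk.cons adj0_13 SimpleGraph.Walk.nil).reverse.copy Qb0.symm rfl,
      by simp⟩
  | succ k ih =>
    obtain ⟨w, hw⟩ := ih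
    obtain ⟨w1, hw1⟩ := walk_map_top w (Pb k) P2
    obtain ⟨wc, hwc⟩ := W1 k
    obtain ⟨w2, hw2⟩ := walk_map_left wc.reverse rfl P1
    exact ⟨w1.append w2, by
      rw [SimpleGraph.Walk.length_append, hw1, hw2, SimpleGraph.Walk.length_reverse,
        two_pow_succ]; omega⟩

lemma Wa' : ∀ k, ∃ w : (SG k).Walk ((2⁻¹:ℝ)^k • u2) u2, w.length < 2^k := by
  intro k; induction k with
  | zero => exact ⟨SimpleGraph.Walk.nil.copy Qa0'.symm rfl, by simp⟩
  | succ k ih =>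
    obtain ⟨w, hw⟩ := ih
    obtain ⟨w1, hw1⟩ := walk_map_left w (Pa' k) rfl
    obtain ⟨wc, hwc⟩ := W1 k
    obtain ⟨w2, hw2⟩ := walk_map_top wc P2 P3
    exact ⟨w1.append w2, by
      rw [SimpleGraph.Walk.length_append, hw1, hw2, two_pow_succ]; omega⟩

lemma Wb' : ∀ k, ∃ w : (SG k).Walk ((2⁻¹:ℝ)^k • u3) u2, w.length ≤ 2^k := by
  intro k; induction k with
  | zero =>
    exact ⟨(SimpleGraph.Walk.cons adj0_23 SimpleGraph.Walk.nil).reverse.copy Qb0'.symm rfl,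
      by simp⟩
  | succ k ih =>
    obtain ⟨w, hw⟩ := ih
    obtain ⟨w1, hw1⟩ := walk_map_left w (Pb' k) rfl
    obtain ⟨wc, hwc⟩ := W1 k
    obtain ⟨w2, hw2⟩ := walk_map_top wc P2 P3
    exact ⟨w1.append w2, by
      rw [SimpleGraph.Walk.length_append, hw1, hw2, two_pow_succ]; omega⟩


/-! ### Preimage analysis for special points -/

lemma pow_half_pos (k : ℕ) : (0:ℝ) < (2⁻¹:ℝ)^k := by positivity
lemma pow_half_le_one (k : ℕ) : (2⁻¹:ℝ)^k ≤ 1 :=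
  pow_le_one₀ (by norm_num) (by norm_num)

lemma u1_preimage {a : Pt} (haT : inT a) :
    (u1 = (2:ℝ)⁻¹ • a → a = u1) ∧ (u1 = (2:ℝ)⁻¹ • (u2 + a) → False) ∧
      (u1 = (2:ℝ)⁻¹ • (u3 + a) → False) := by
  obtain ⟨hT1, hT2, hT3⟩ := haT
  refine ⟨fun h => ?_, fun h => ?_, fun h => ?_⟩
  · have h1 := congrArg Prod.fst h
    have h2 := congrArg Prod.snd h
    simp only [smul_fst, smul_snd, u1_1, u1_2] at h1 h2
    refine pt_ext ?_ ?_ <;> simp only [u1_1, u1_2] <;> linarith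
  · have h2 := congrArg Prod.snd h
    simp only [smul_snd, Prod.snd_add, u1_2, u2_2] at h2
    nlinarith [s3_pos]
  · have h1 := congrArg Prod.fst h
    have h2 := congrArg Prod.snd h
    simp only [smul_fst, smul_snd, Prod.fst_add, Prod.snd_add, u1_1, u1_2, u3_1, u3_2] at h1 h2
    nlinarith [s3_pos]

lemma u2_preimage {a : Pt} (haT : inT a) :
    (u2 = (2:ℝ)⁻¹ • a → False) ∧ (u2 = (2:ℝ)⁻¹ • (u2 + a) → a = u2) ∧
      (u2 = (2:ℝ)⁻¹ • (u3 + a) → False) := by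
  obtain ⟨hT1, hT2, hT3⟩ := haT
  refine ⟨fun h => ?_, fun h => ?_, fun h => ?_⟩
  · have h1 := congrArg Prod.fst h
    have h2 := congrArg Prod.snd h
    simp only [smul_fst, smul_snd, u2_1, u2_2] at h1 h2
    nlinarith [s3_pos]
  · have h1 := congrArg Prod.fst h
    have h2 := congrArg Prod.snd h
    simp only [smul_fst, smul_snd, Prod.fst_add, Prod.snd_add, u2_1, u2_2] at h1 h2
    refine pt_ext ?_ ?_ <;> simp only [u2_1, u2_2] <;> linarith
  · have h1 := congrArg Prod.fst h
    have h2 := congrArg Prod.snd h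
    simp only [smul_fst, smul_snd, Prod.fst_add, Prod.snd_add, u2_1, u2_2, u3_1, u3_2] at h1 h2
    nlinarith [s3_pos]

/-- the midpoint of the side `u1u2` -/
def pm : Pt := (2:ℝ)⁻¹ • u2

lemma pm_preimage {a : Pt} (haT : inT a) :
    (pm = (2:ℝ)⁻¹ • a → a = u2) ∧ (pm = (2:ℝ)⁻¹ • (u2 + a) → a = u1) ∧
      (pm = (2:ℝ)⁻¹ • (u3 + a) → False) := by
  obtain ⟨hT1, hT2, hT3⟩ := haT
  refine ⟨fun h => ?_, fun h => ?_, fun h => ?_⟩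
  · have h1 := congrArg Prod.fst h
    have h2 := congrArg Prod.snd h
    simp only [pm, smul_fst, smul_snd, u2_1, u2_2] at h1 h2
    refine pt_ext ?_ ?_ <;> simp only [u2_1, u2_2] <;> linarith
  · have h1 := congrArg Prod.fst h
    have h2 := congrArg Prod.snd h
    simp only [pm, smul_fst, smul_snd, Prod.fst_add, Prod.snd_add, u2_1, u2_2] at h1 h2
    refine pt_ext ?_ ?_ <;> simp only [u1_1, u1_2] <;> linarith
  · have h1 := congrArg Prod.fst h
    have h2 := congrArg Prod.snd h
    simp only [pm, smul_fst, smul_snd, Prod.fst_add, Prod.snd_add, u2_1, u2_2, u3_1, u3_2]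
      at h1 h2
    nlinarith [s3_pos]

/-! ### Edges at the corners -/

lemma CE1 : ∀ k (y : Pt), ((u1, y) ∈ Ed k ∨ (y, u1) ∈ Ed k) ↔
    (y = (2⁻¹:ℝ)^k • u2 ∨ y = (2⁻¹:ℝ)^k • u3) := by
  intro k
  induction k with
  | zero =>
    intro y
    simp only [pow_zero, one_smul]
    constructor
    · intro h
      rcases h with h | h <;>
        simp only [Ed_zero, Set.mem_insert_iff, Set.mem_singleton_iff, Prod.mk.injEq] at h
      · rcases h with ⟨-, h2⟩ | ⟨h1, -⟩ | ⟨-, h2⟩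
        · exact Or.inl h2
        · exact absurd h1 u1_ne_u2
        · exact Or.inr h2
      · rcases h with ⟨-, h2⟩ | ⟨-, h2⟩ | ⟨-, h2⟩
        · exact absurd h2 (fun h => u1_ne_u2 h)
        · exact absurd h2 (fun h => u1_ne_u3 h)
        · exact absurd h2 (fun h => u1_ne_u3 h)
    · intro h
      rcases h with rfl | rfl
      · exact Or.inl (Or.inl rfl)
      · exact Or.inl (Or.inr (Or.inr rfl))
  | succ k ih =>
    intro y
    constructor
    · intro h
      have hcases : ∃ b, ((u1, b) ∈ Ed k ∨ (b, u1) ∈ Ed k) ∧ y = (2:ℝ)⁻¹ • b := by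
        rcases h with h | h
        · obtain ⟨a, b, hab, hc⟩ := ed_cases h
          have hTa := (ed_inT _ _ _ hab).1
          rcases hc with ⟨h1, h2⟩ | ⟨h1, h2⟩ | ⟨h1, h2⟩
          · exact ⟨b, Or.inl ((u1_preimage hTa).1 h1 ▸ hab), h2⟩
          · exact absurd h1 fun h' => (u1_preimage hTa).2.1 h'
          · exact absurd h1 fun h' => (u1_preimage hTa).2.2 h'
        · obtain ⟨a, b, hab, hc⟩ := ed_cases h
          have hTb := (ed_inT _ _ _ hab).2
          rcases hc with ⟨h1, h2⟩ | ⟨h1, h2⟩ | ⟨h1, h2⟩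
          · exact ⟨a, Or.inr ((u1_preimage hTb).1 h2 ▸ hab), h1⟩
          · exact absurd h2 fun h' => (u1_preimage hTb).2.1 h'
          · exact absurd h2 fun h' => (u1_preimage hTb).2.2 h'
      obtain ⟨b, hb, rfl⟩ := hcases
      rcases (ih b).mp hb with rfl | rfl
      · exact Or.inl (Pa' k)
      · exact Or.inr (Pb' k)
    · intro h
      rcases h with rfl | rfl
      · rcases (ih _).mpr (Or.inl rfl) with h' | h'
        · have := ed_left h'; rw [P1, Pa' k] at this; exact Or.inl this
        · have := ed_left h'; rw [P1, Pa' k] at this; exact Or.inr this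
      · rcases (ih _).mpr (Or.inr rfl) with h' | h'
        · have := ed_left h'; rw [P1, Pb' k] at this; exact Or.inl this
        · have := ed_left h'; rw [P1, Pb' k] at this; exact Or.inr this

lemma Qc0 : u2 + (2⁻¹:ℝ)^0 • (u1 - u2) = u1 := by
  refine pt_ext ?_ ?_ <;>
    simp only [smul_fst, smul_snd, Prod.fst_add, Prod.snd_add, Prod.fst_sub, Prod.snd_sub,
      u1_1, u1_2, u2_1, u2_2, pow_zero] <;> ring

lemma Pc (k : ℕ) : (2:ℝ)⁻¹ • (u2 + (u2 + (2⁻¹:ℝ)^k • (u1 - u2))) =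
    u2 + (2⁻¹:ℝ)^(k+1) • (u1 - u2) := by
  refine pt_ext ?_ ?_ <;>
    simp only [smul_fst, smul_snd, Prod.fst_add, Prod.snd_add, Prod.fst_sub, Prod.snd_sub,
      u1_1, u1_2, u2_1, u2_2] <;> ring

lemma CE2 : ∀ k (y : Pt), ((u2, y) ∈ Ed k ∨ (y, u2) ∈ Ed k) ↔
    (y = u2 + (2⁻¹:ℝ)^k • (u1 - u2) ∨ y = u2 + (2⁻¹:ℝ)^k • (u3 - u2)) := by
  intro k
  induction k with
  | zero =>
    intro y
    rw [Qc0, Qb0]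
    constructor
    · intro h
      rcases h with h | h <;>
        simp only [Ed_zero, Set.mem_insert_iff, Set.mem_singleton_iff, Prod.mk.injEq] at h
      · rcases h with ⟨h1, -⟩ | ⟨-, h2⟩ | ⟨h1, -⟩
        · exact absurd h1 (fun h => u1_ne_u2 h.symm)
        · exact Or.inr h2
        · exact absurd h1 (fun h => u1_ne_u2 h.symm)
      · rcases h with ⟨h1, -⟩ | ⟨-, h2⟩ | ⟨-, h2⟩
        · exact Or.inl h1
        · exact absurd h2 u2_ne_u3
        · exact absurd h2 u2_ne_u3
    · intro h
      rcases h with rfl | rfl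
      · exact Or.inr (Or.inl rfl)
      · exact Or.inl (Or.inr (Or.inl rfl))
  | succ k ih =>
    intro y
    constructor
    · intro h
      have hcases : ∃ b, ((u2, b) ∈ Ed k ∨ (b, u2) ∈ Ed k) ∧ y = (2:ℝ)⁻¹ • (u2 + b) := by
        rcases h with h | h
        · obtain ⟨a, b, hab, hc⟩ := ed_cases h
          have hTa := (ed_inT _ _ _ hab).1
          rcases hc with ⟨h1, h2⟩ | ⟨h1, h2⟩ | ⟨h1, h2⟩
          · exact absurd h1 fun h' => (u2_preimage hTa).1 h'
          · exact ⟨b, Or.inl ((u2_preimage hTa).2.1 h1 ▸ hab), h2⟩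
          · exact absurd h1 fun h' => (u2_preimage hTa).2.2 h'
        · obtain ⟨a, b, hab, hc⟩ := ed_cases h
          have hTb := (ed_inT _ _ _ hab).2
          rcases hc with ⟨h1, h2⟩ | ⟨h1, h2⟩ | ⟨h1, h2⟩
          · exact absurd h2 fun h' => (u2_preimage hTb).1 h'
          · exact ⟨a, Or.inr ((u2_preimage hTb).2.1 h2 ▸ hab), h1⟩
          · exact absurd h2 fun h' => (u2_preimage hTb).2.2 h'
      obtain ⟨b, hb, rfl⟩ := hcases
      rcases (ih b).mp hb with rfl | rfl
      · exact Or.inl (Pc k)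
      · exact Or.inr (Pb k)
    · intro h
      rcases h with rfl | rfl
      · rcases (ih _).mpr (Or.inl rfl) with h' | h'
        · have := ed_top h'; rw [P3, Pc k] at this; exact Or.inl this
        · have := ed_top h'; rw [P3, Pc k] at this; exact Or.inr this
      · rcases (ih _).mpr (Or.inr rfl) with h' | h'
        · have := ed_top h'; rw [P3, Pb k] at this; exact Or.inl this
        · have := ed_top h'; rw [P3, Pb k] at this; exact Or.inr this

/-! ### Neighbors of the midpoint -/

def q1 (k : ℕ) : Pt := (2:ℝ)⁻¹ • (u2 + (2⁻¹:ℝ)^k • (u1 - u2))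
def q2 (k : ℕ) : Pt := (2:ℝ)⁻¹ • (u2 + (2⁻¹:ℝ)^k • (u3 - u2))
def q3 (k : ℕ) : Pt := (2:ℝ)⁻¹ • (u2 + (2⁻¹:ℝ)^k • u2)
def q4 (k : ℕ) : Pt := (2:ℝ)⁻¹ • (u2 + (2⁻¹:ℝ)^k • u3)

lemma nbhd_pm (k : ℕ) (y : Pt) : (SG (k+1)).Adj pm y ↔
    (y = q1 k ∨ y = q2 k ∨ y = q3 k ∨ y = q4 k) := by
  constructor
  · intro h
    rcases h.1 with h' | h'
    · obtain ⟨a, b, hab, hc⟩ := ed_cases h'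
      have hTa := (ed_inT _ _ _ hab).1
      rcases hc with ⟨h1, h2⟩ | ⟨h1, h2⟩ | ⟨h1, h2⟩
      · have ha := (pm_preimage hTa).1 h1
        subst ha
        rcases (CE2 k b).mp (Or.inl hab) with rfl | rfl
        · exact Or.inl h2
        · exact Or.inr (Or.inl h2)
      · have ha := (pm_preimage hTa).2.1 h1
        subst ha
        rcases (CE1 k b).mp (Or.inl hab) with rfl | rfl
        · exact Or.inr (Or.inr (Or.inl h2))
        · exact Or.inr (Or.inr (Or.inr h2))
      · exact absurd h1 fun h'' => (pm_preimage hTa).2.2 h''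
    · obtain ⟨a, b, hab, hc⟩ := ed_cases h'
      have hTb := (ed_inT _ _ _ hab).2
      rcases hc with ⟨h1, h2⟩ | ⟨h1, h2⟩ | ⟨h1, h2⟩
      · have hb := (pm_preimage hTb).1 h2
        subst hb
        rcases (CE2 k a).mp (Or.inr hab) with rfl | rfl
        · exact Or.inl h1
        · exact Or.inr (Or.inl h1)
      · have hb := (pm_preimage hTb).2.1 h2
        subst hb
        rcases (CE1 k a).mp (Or.inr hab) with rfl | rfl
        · exact Or.inr (Or.inr (Or.inl h1))
        · exact Or.inr (Or.inr (Or.inr h1))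
      · exact absurd h2 fun h'' => (pm_preimage hTb).2.2 h''
  · intro h
    have hne1 : pm ≠ q1 k := by
      intro h'
      have := congrArg Prod.fst h'
      simp only [pm, q1, smul_fst, Prod.fst_add, Prod.fst_sub, u1_1, u2_1] at this
      nlinarith [pow_half_pos k]
    have hne2 : pm ≠ q2 k := by
      intro h'
      have := congrArg Prod.fst h'
      simp only [pm, q2, smul_fst, Prod.fst_add, Prod.fst_sub, u2_1, u3_1] at this
      nlinarith [pow_half_pos k]
    have hne3 : pm ≠ q3 k := by
      intro h'
      have := congrArg Prod.fst h'
      simp only [pm, q3, smul_fst, Prod.fst_add, u2_1] at this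
      nlinarith [pow_half_pos k]
    have hne4 : pm ≠ q4 k := by
      intro h'
      have := congrArg Prod.fst h'
      simp only [pm, q4, smul_fst, Prod.fst_add, u2_1, u3_1] at this
      nlinarith [pow_half_pos k]
    rcases h with rfl | rfl | rfl | rfl
    · refine ⟨?_, hne1⟩
      rcases (CE2 k _).mpr (Or.inl rfl) with h' | h'
      · exact Or.inl (ed_left h')
      · exact Or.inr (ed_left h')
    · refine ⟨?_, hne2⟩
      rcases (CE2 k _).mpr (Or.inr rfl) with h' | h'
      · exact Or.inl (ed_left h')
      · exact Or.inr (ed_left h')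
    · refine ⟨?_, hne3⟩
      rcases (CE1 k _).mpr (Or.inl rfl) with h' | h'
      · have := ed_top h'
        rw [show (2:ℝ)⁻¹ • (u2 + u1) = pm from P2] at this
        exact Or.inl this
      · have := ed_top h'
        rw [show (2:ℝ)⁻¹ • (u2 + u1) = pm from P2] at this
        exact Or.inr this
    · refine ⟨?_, hne4⟩
      rcases (CE1 k _).mpr (Or.inr rfl) with h' | h'
      · have := ed_top h'
        rw [show (2:ℝ)⁻¹ • (u2 + u1) = pm from P2] at this
        exact Or.inl this
      · have := ed_top h'
        rw [show (2:ℝ)⁻¹ • (u2 + u1) = pm from P2] at this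
        exact Or.inr this


/-! ### Distance computations -/

lemma lb_comp1 {n : ℕ} {x y : Pt} {c : ℕ} (h : (SG n).Reachable x y) (v : ℝ)
    (he : √3 * (x - y).1 + (x - y).2 = v)
    (hv : (c:ℝ) * (√3 * (2⁻¹:ℝ)^n) ≤ |v|) : c ≤ (SG n).dist x y :=
  dist_ge_of_L h c (le_trans (he ▸ hv) (L_comp1 _))

lemma lb_comp2 {n : ℕ} {x y : Pt} {c : ℕ} (h : (SG n).Reachable x y) (v : ℝ)
    (he : 2 * (x - y).2 = v)
    (hv : (c:ℝ) * (√3 * (2⁻¹:ℝ)^n) ≤ |v|) : c ≤ (SG n).dist x y :=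
  dist_ge_of_L h c (le_trans (he ▸ hv) (L_comp2 _))

lemma lb_comp3 {n : ℕ} {x y : Pt} {c : ℕ} (h : (SG n).Reachable x y) (v : ℝ)
    (he : √3 * (x - y).1 - (x - y).2 = v)
    (hv : (c:ℝ) * (√3 * (2⁻¹:ℝ)^n) ≤ |v|) : c ≤ (SG n).dist x y :=
  dist_ge_of_L h c (le_trans (he ▸ hv) (L_comp3 _))

lemma hvr (k : ℕ) : ((2^k : ℕ) : ℝ) = (2:ℝ)^k := by push_cast; ring
lemma one_le_two_pow (k : ℕ) : (1:ℕ) ≤ 2^k := Nat.one_le_pow k 2 (by norm_num)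
lemma hvr' (k : ℕ) : ((2^k - 1 : ℕ) : ℝ) = (2:ℝ)^k - 1 := by
  have h1 := one_le_two_pow k
  push_cast [h1]; ring

lemma Pq1 (k : ℕ) : (2:ℝ)⁻¹ • ((1 - (2⁻¹:ℝ)^k) • u2) = q1 k := by
  refine pt_ext ?_ ?_ <;>
    simp only [q1, smul_fst, smul_snd, Prod.fst_sub, Prod.snd_sub, Prod.fst_add, Prod.snd_add, u1_1, u1_2, u2_1, u2_2, u3_1, u3_2] <;> ring


lemma dcorner_pm (k : ℕ) : dcorner (k+1) pm = 2^k := by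
  obtain ⟨wc, hwc⟩ := W1 k
  obtain ⟨w0, hw0l⟩ := walk_map_left wc.reverse rfl P1
  obtain ⟨w12, h12⟩ := W1 (k+1)
  obtain ⟨w13, h13⟩ := W2 (k+1)
  have r1 : (SG (k+1)).Reachable pm u1 := ⟨w0⟩
  have r2 : (SG (k+1)).Reachable pm u2 := r1.trans ⟨w12⟩
  have r3 : (SG (k+1)).Reachable pm u3 := r1.trans ⟨w13⟩
  have hub : (SG (k+1)).dist pm u1 ≤ 2^k := by
    refine le_trans (SimpleGraph.dist_le w0) ?_
    rw [hw0l, SimpleGraph.Walk.length_reverse]; exact hwc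
  have ht1 : (2:ℝ)^k * (2⁻¹:ℝ)^k = 1 := by rw [← mul_pow]; norm_num
  have ht0 : (0:ℝ) < (2⁻¹:ℝ)^k := pow_half_pos k
  have htle : (2⁻¹:ℝ)^k ≤ 1 := pow_half_le_one k
  have lb1 : 2^k ≤ (SG (k+1)).dist pm u1 := by
    refine lb_comp1 r1 (√3 * (2:ℝ)⁻¹) (by simp only [pm, smul_fst, smul_snd, Prod.fst_sub, Prod.snd_sub, Prod.fst_add, Prod.snd_add, u1_1, u1_2, u2_1, u2_2, u3_1, u3_2]; ring) ?_
    rw [abs_of_nonneg (by positivity), hvr, pow_succ]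
    nlinarith [ht1, ht0.le, htle, s3_nonneg]
  have lb2 : 2^k ≤ (SG (k+1)).dist pm u2 := by
    refine lb_comp2 r2 (-(√3 * (2:ℝ)⁻¹)) (by simp only [pm, smul_fst, smul_snd, Prod.fst_sub, Prod.snd_sub, Prod.fst_add, Prod.snd_add, u1_1, u1_2, u2_1, u2_2, u3_1, u3_2]; ring) ?_
    rw [abs_of_nonpos (by nlinarith [s3_nonneg]), hvr, pow_succ]
    nlinarith [ht1, ht0.le, htle, s3_nonneg]
  have lb3 : 2^k ≤ (SG (k+1)).dist pm u3 := by
    refine lb_comp3 r3 (-√3) (by simp only [pm, smul_fst, smul_snd, Prod.fst_sub, Prod.snd_sub, Prod.fst_add, Prod.snd_add, u1_1, u1_2, u2_1, u2_2, u3_1, u3_2]; ring) ?_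
    rw [abs_of_nonpos (by nlinarith [s3_nonneg]), hvr, pow_succ]
    nlinarith [ht1, ht0.le, htle, s3_nonneg]
  simp only [dcorner, gdist]
  exact le_antisymm (le_trans (min_le_left _ _) hub) (le_min lb1 (le_min lb2 lb3))

lemma dcorner_q1 (k : ℕ) : dcorner (k+1) (q1 k) = 2^k - 1 := by
  obtain ⟨wc, hwc⟩ := Wa k
  obtain ⟨w0, hw0l⟩ := walk_map_left wc (Pq1 k) P1
  obtain ⟨w12, h12⟩ := W1 (k+1)
  obtain ⟨w13, h13⟩ := W2 (k+1)
  have r1 : (SG (k+1)).Reachable (q1 k) u1 := ⟨w0⟩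
  have r2 : (SG (k+1)).Reachable (q1 k) u2 := r1.trans ⟨w12⟩
  have r3 : (SG (k+1)).Reachable (q1 k) u3 := r1.trans ⟨w13⟩
  have hub : (SG (k+1)).dist (q1 k) u1 ≤ 2^k - 1 := by
    refine le_trans (SimpleGraph.dist_le w0) ?_
    rw [hw0l]; omega
  have ht1 : (2:ℝ)^k * (2⁻¹:ℝ)^k = 1 := by rw [← mul_pow]; norm_num
  have ht0 : (0:ℝ) < (2⁻¹:ℝ)^k := pow_half_pos k
  have htle : (2⁻¹:ℝ)^k ≤ 1 := pow_half_le_one k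
  have lb1 : 2^k - 1 ≤ (SG (k+1)).dist (q1 k) u1 := by
    refine lb_comp1 r1 (√3 * ((1 - ((2⁻¹:ℝ)^k)) * (2:ℝ)⁻¹)) (by simp only [q1, smul_fst, smul_snd, Prod.fst_sub, Prod.snd_sub, Prod.fst_add, Prod.snd_add, u1_1, u1_2, u2_1, u2_2, u3_1, u3_2]; ring) ?_
    rw [abs_of_nonneg (by nlinarith [s3_nonneg]), hvr', pow_succ]
    nlinarith [ht1, ht0.le, htle, s3_nonneg]
  have lb2 : 2^k - 1 ≤ (SG (k+1)).dist (q1 k) u2 := by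
    refine lb_comp2 r2 (-(√3 * ((1 + ((2⁻¹:ℝ)^k)) * (2:ℝ)⁻¹))) (by simp only [q1, smul_fst, smul_snd, Prod.fst_sub, Prod.snd_sub, Prod.fst_add, Prod.snd_add, u1_1, u1_2, u2_1, u2_2, u3_1, u3_2]; ring) ?_
    rw [abs_of_nonpos (by nlinarith [s3_nonneg, ht0.le]), hvr', pow_succ]
    nlinarith [ht1, ht0.le, htle, s3_nonneg]
  have lb3 : 2^k - 1 ≤ (SG (k+1)).dist (q1 k) u3 := by
    refine lb_comp3 r3 (-√3) (by simp only [q1, smul_fst, smul_snd, Prod.fst_sub, Prod.snd_sub, Prod.fst_add, Prod.snd_add, u1_1, u1_2, u2_1, u2_2, u3_1, u3_2]; ring) ?_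
    rw [abs_of_nonpos (by nlinarith [s3_nonneg]), hvr', pow_succ]
    nlinarith [ht1, ht0.le, htle, s3_nonneg]
  simp only [dcorner, gdist]
  exact le_antisymm (le_trans (min_le_left _ _) hub) (le_min lb1 (le_min lb2 lb3))

lemma dcorner_q2 (k : ℕ) : dcorner (k+1) (q2 k) = 2^k := by
  obtain ⟨wc, hwc⟩ := Wb k
  obtain ⟨w0, hw0l⟩ := walk_map_left wc rfl P1
  obtain ⟨w12, h12⟩ := W1 (k+1)
  obtain ⟨w13, h13⟩ := W2 (k+1)
  have r1 : (SG (k+1)).Reachable (q2 k) u1 := ⟨w0⟩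
  have r2 : (SG (k+1)).Reachable (q2 k) u2 := r1.trans ⟨w12⟩
  have r3 : (SG (k+1)).Reachable (q2 k) u3 := r1.trans ⟨w13⟩
  have hub : (SG (k+1)).dist (q2 k) u1 ≤ 2^k := by
    refine le_trans (SimpleGraph.dist_le w0) ?_
    rw [hw0l]; exact hwc
  have ht1 : (2:ℝ)^k * (2⁻¹:ℝ)^k = 1 := by rw [← mul_pow]; norm_num
  have ht0 : (0:ℝ) < (2⁻¹:ℝ)^k := pow_half_pos k
  have htle : (2⁻¹:ℝ)^k ≤ 1 := pow_half_le_one k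
  have lb1 : 2^k ≤ (SG (k+1)).dist (q2 k) u1 := by
    refine lb_comp1 r1 (√3 * (2:ℝ)⁻¹) (by simp only [q2, smul_fst, smul_snd, Prod.fst_sub, Prod.snd_sub, Prod.fst_add, Prod.snd_add, u1_1, u1_2, u2_1, u2_2, u3_1, u3_2]; ring) ?_
    rw [abs_of_nonneg (by positivity), hvr, pow_succ]
    nlinarith [ht1, ht0.le, htle, s3_nonneg]
  have lb2 : 2^k ≤ (SG (k+1)).dist (q2 k) u2 := by
    refine lb_comp2 r2 (-(√3 * ((1 + ((2⁻¹:ℝ)^k)) * (2:ℝ)⁻¹))) (by simp only [q2, smul_fst, smul_snd, Prod.fst_sub, Prod.snd_sub, Prod.fst_add, Prod.snd_add, u1_1, u1_2, u2_1, u2_2, u3_1, u3_2]; ring) ?_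
    rw [abs_of_nonpos (by nlinarith [s3_nonneg, ht0.le]), hvr, pow_succ]
    nlinarith [ht1, ht0.le, htle, s3_nonneg]
  have lb3 : 2^k ≤ (SG (k+1)).dist (q2 k) u3 := by
    refine lb_comp3 r3 (√3 * (((2⁻¹:ℝ)^k) * (2:ℝ)⁻¹ - 1)) (by simp only [q2, smul_fst, smul_snd, Prod.fst_sub, Prod.snd_sub, Prod.fst_add, Prod.snd_add, u1_1, u1_2, u2_1, u2_2, u3_1, u3_2]; ring) ?_
    rw [abs_of_nonpos (by nlinarith [s3_nonneg, ht0.le, htle]), hvr, pow_succ]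
    nlinarith [ht1, ht0.le, htle, s3_nonneg]
  simp only [dcorner, gdist]
  exact le_antisymm (le_trans (min_le_left _ _) hub) (le_min lb1 (le_min lb2 lb3))

lemma dcorner_q3 (k : ℕ) : dcorner (k+1) (q3 k) = 2^k - 1 := by
  obtain ⟨wc, hwc⟩ := Wa' k
  obtain ⟨w0, hw0l⟩ := walk_map_top wc rfl P3
  obtain ⟨w12, h12⟩ := W1 (k+1)
  obtain ⟨w23, h23⟩ := W3 (k+1)
  have r2 : (SG (k+1)).Reachable (q3 k) u2 := ⟨w0⟩
  have r1 : (SG (k+1)).Reachable (q3 k) u1 := r2.trans ⟨w12.reverse⟩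
  have r3 : (SG (k+1)).Reachable (q3 k) u3 := r2.trans ⟨w23⟩
  have hub : (SG (k+1)).dist (q3 k) u2 ≤ 2^k - 1 := by
    refine le_trans (SimpleGraph.dist_le w0) ?_
    rw [hw0l]; omega
  have ht1 : (2:ℝ)^k * (2⁻¹:ℝ)^k = 1 := by rw [← mul_pow]; norm_num
  have ht0 : (0:ℝ) < (2⁻¹:ℝ)^k := pow_half_pos k
  have htle : (2⁻¹:ℝ)^k ≤ 1 := pow_half_le_one k
  have lb1 : 2^k - 1 ≤ (SG (k+1)).dist (q3 k) u1 := by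
    refine lb_comp1 r1 (√3 * ((1 + ((2⁻¹:ℝ)^k)) * (2:ℝ)⁻¹)) (by simp only [q3, smul_fst, smul_snd, Prod.fst_sub, Prod.snd_sub, Prod.fst_add, Prod.snd_add, u1_1, u1_2, u2_1, u2_2, u3_1, u3_2]; ring) ?_
    rw [abs_of_nonneg (by nlinarith [s3_nonneg, ht0.le]), hvr', pow_succ]
    nlinarith [ht1, ht0.le, htle, s3_nonneg]
  have lb2 : 2^k - 1 ≤ (SG (k+1)).dist (q3 k) u2 := by
    refine lb_comp2 r2 (√3 * ((((2⁻¹:ℝ)^k) - 1) * (2:ℝ)⁻¹)) (by simp only [q3, smul_fst, smul_snd, Prod.fst_sub, Prod.snd_sub, Prod.fst_add, Prod.snd_add, u1_1, u1_2, u2_1, u2_2, u3_1, u3_2]; ring) ?_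
    rw [abs_of_nonpos (by nlinarith [s3_nonneg, htle]), hvr', pow_succ]
    nlinarith [ht1, ht0.le, htle, s3_nonneg]
  have lb3 : 2^k - 1 ≤ (SG (k+1)).dist (q3 k) u3 := by
    refine lb_comp3 r3 (-√3) (by simp only [q3, smul_fst, smul_snd, Prod.fst_sub, Prod.snd_sub, Prod.fst_add, Prod.snd_add, u1_1, u1_2, u2_1, u2_2, u3_1, u3_2]; ring) ?_
    rw [abs_of_nonpos (by nlinarith [s3_nonneg]), hvr', pow_succ]
    nlinarith [ht1, ht0.le, htle, s3_nonneg]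
  simp only [dcorner, gdist]
  exact le_antisymm (le_trans (le_trans (min_le_right _ _) (min_le_left _ _)) hub)
    (le_min lb1 (le_min lb2 lb3))

lemma dcorner_q4 (k : ℕ) : dcorner (k+1) (q4 k) = 2^k := by
  obtain ⟨wc, hwc⟩ := Wb' k
  obtain ⟨w0, hw0l⟩ := walk_map_top wc rfl P3
  obtain ⟨w12, h12⟩ := W1 (k+1)
  obtain ⟨w23, h23⟩ := W3 (k+1)
  have r2 : (SG (k+1)).Reachable (q4 k) u2 := ⟨w0⟩
  have r1 : (SG (k+1)).Reachable (q4 k) u1 := r2.trans ⟨w12.reverse⟩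
  have r3 : (SG (k+1)).Reachable (q4 k) u3 := r2.trans ⟨w23⟩
  have hub : (SG (k+1)).dist (q4 k) u2 ≤ 2^k := by
    refine le_trans (SimpleGraph.dist_le w0) ?_
    rw [hw0l]; exact hwc
  have ht1 : (2:ℝ)^k * (2⁻¹:ℝ)^k = 1 := by rw [← mul_pow]; norm_num
  have ht0 : (0:ℝ) < (2⁻¹:ℝ)^k := pow_half_pos k
  have htle : (2⁻¹:ℝ)^k ≤ 1 := pow_half_le_one k
  have lb1 : 2^k ≤ (SG (k+1)).dist (q4 k) u1 := by
    refine lb_comp1 r1 (√3 * ((1 + ((2⁻¹:ℝ)^k)) * (2:ℝ)⁻¹)) (by simp only [q4, smul_fst, smul_snd, Prod.fst_sub, Prod.snd_sub, Prod.fst_add, Prod.snd_add, u1_1, u1_2, u2_1, u2_2, u3_1, u3_2]; ring) ?_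
    rw [abs_of_nonneg (by nlinarith [s3_nonneg, ht0.le]), hvr, pow_succ]
    nlinarith [ht1, ht0.le, htle, s3_nonneg]
  have lb2 : 2^k ≤ (SG (k+1)).dist (q4 k) u2 := by
    refine lb_comp2 r2 (-(√3 * (2:ℝ)⁻¹)) (by simp only [q4, smul_fst, smul_snd, Prod.fst_sub, Prod.snd_sub, Prod.fst_add, Prod.snd_add, u1_1, u1_2, u2_1, u2_2, u3_1, u3_2]; ring) ?_
    rw [abs_of_nonpos (by nlinarith [s3_nonneg]), hvr, pow_succ]
    nlinarith [ht1, ht0.le, htle, s3_nonneg]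
  have lb3 : 2^k ≤ (SG (k+1)).dist (q4 k) u3 := by
    refine lb_comp3 r3 (√3 * (((2⁻¹:ℝ)^k) * (2:ℝ)⁻¹ - 1)) (by simp only [q4, smul_fst, smul_snd, Prod.fst_sub, Prod.snd_sub, Prod.fst_add, Prod.snd_add, u1_1, u1_2, u2_1, u2_2, u3_1, u3_2]; ring) ?_
    rw [abs_of_nonpos (by nlinarith [s3_nonneg, ht0.le, htle]), hvr, pow_succ]
    nlinarith [ht1, ht0.le, htle, s3_nonneg]
  simp only [dcorner, gdist]
  exact le_antisymm (le_trans (le_trans (min_le_right _ _) (min_le_left _ _)) hub)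
    (le_min lb1 (le_min lb2 lb3))


/-! ### Laplacian evaluation -/

lemma lap_eval {n : ℕ} {x : Pt} {f : Pt → ℝ} (s : Finset Pt)
    (hs : ∀ y, (SG n).Adj x y ↔ y ∈ s) : lap n f x = 4 * f x - ∑ y ∈ s, f y := by
  unfold lap
  congr 1
  have h1 : (∑ᶠ (y : Pt) (_ : (SG n).Adj x y), f y) =
      ∑ᶠ (y : Pt) (_ : y ∈ (s : Set Pt)), f y :=
    finsum_congr fun y => by
      have he : ((SG n).Adj x y) = (y ∈ (s : Set Pt)) := propext (by simpa using hs y)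
      rw [he]
  rw [h1, finsum_mem_coe_finset]

lemma q_ne_12 (k : ℕ) : q1 k ≠ q2 k := by
  intro h'
  have := congrArg Prod.fst h'
  simp only [q1, q2, smul_fst, Prod.fst_add, Prod.fst_sub, u1_1, u2_1, u3_1] at this
  nlinarith [pow_half_pos k]
lemma q_ne_13 (k : ℕ) : q1 k ≠ q3 k := by
  intro h'
  have := congrArg Prod.fst h'
  simp only [q1, q3, smul_fst, Prod.fst_add, Prod.fst_sub, u1_1, u2_1] at this
  nlinarith [pow_half_pos k]
lemma q_ne_14 (k : ℕ) : q1 k ≠ q4 k := by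
  intro h'
  have := congrArg Prod.fst h'
  simp only [q1, q4, smul_fst, Prod.fst_add, Prod.fst_sub, u1_1, u2_1, u3_1] at this
  nlinarith [pow_half_pos k]
lemma q_ne_23 (k : ℕ) : q2 k ≠ q3 k := by
  intro h'
  have := congrArg Prod.snd h'
  simp only [q2, q3, smul_snd, Prod.snd_add, Prod.snd_sub, u2_2, u3_2] at this
  nlinarith [pow_half_pos k, s3_pos]
lemma q_ne_24 (k : ℕ) : q2 k ≠ q4 k := by
  intro h'
  have := congrArg Prod.fst h'
  simp only [q2, q4, smul_fst, Prod.fst_add, Prod.fst_sub, u2_1, u3_1] at this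
  nlinarith [pow_half_pos k]
lemma q_ne_34 (k : ℕ) : q3 k ≠ q4 k := by
  intro h'
  have := congrArg Prod.snd h'
  simp only [q3, q4, smul_snd, Prod.snd_add, u2_2, u3_2] at this
  nlinarith [pow_half_pos k, s3_pos]

lemma lap_pm (k : ℕ) :
    lap (k+1) (fun y => (dcorner (k+1) y : ℝ)) pm = 2 := by
  classical
  have hs : ∀ y, (SG (k+1)).Adj pm y ↔ y ∈ ({q1 k, q2 k, q3 k, q4 k} : Finset Pt) := by
    intro y
    rw [nbhd_pm k y]
    simp [Finset.mem_insert, Finset.mem_singleton]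
  rw [lap_eval _ hs]
  have hn1 : q1 k ∉ ({q2 k, q3 k, q4 k} : Finset Pt) := by
    simp only [Finset.mem_insert, Finset.mem_singleton]
    push_neg
    exact ⟨q_ne_12 k, q_ne_13 k, q_ne_14 k⟩
  have hn2 : q2 k ∉ ({q3 k, q4 k} : Finset Pt) := by
    simp only [Finset.mem_insert, Finset.mem_singleton]
    push_neg
    exact ⟨q_ne_23 k, q_ne_24 k⟩
  have hn3 : q3 k ∉ ({q4 k} : Finset Pt) := by
    simp only [Finset.mem_singleton]
    exact q_ne_34 k
  rw [Finset.sum_insert hn1, Finset.sum_insert hn2, Finset.sum_insert hn3,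
    Finset.sum_singleton]
  simp only [dcorner_pm, dcorner_q1, dcorner_q2, dcorner_q3, dcorner_q4]
  rw [hvr, hvr']
  ring

/-! ### Vertex membership -/

lemma u1_mem (n : ℕ) : u1 ∈ V n := by
  induction n with
  | zero => exact Or.inl rfl
  | succ n ih => exact P1 ▸ mem_V_left ih
lemma u2_mem (n : ℕ) : u2 ∈ V n := by
  induction n with
  | zero => exact Or.inr (Or.inl rfl)
  | succ n ih => exact P3 ▸ mem_V_top ih
lemma u3_mem (n : ℕ) : u3 ∈ V n := by
  induction n with
  | zero => exact Or.inr (Or.inr rfl)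
  | succ n ih => exact P5 ▸ mem_V_right ih

lemma pm_mem (k : ℕ) : pm ∈ V (k+1) := mem_V_left (u2_mem k)

lemma pm_not_corner : pm ∉ corners := by
  intro h
  rcases h with h | h | h <;> {
    have := congrArg Prod.fst h
    simp only [pm, smul_fst, u1_1, u2_1, u3_1] at this
    norm_num at this
  }


/-! ### Rotation by 120 degrees -/

lemma ctr_1 : ctr.1 = 2⁻¹ := by
  simp only [ctr, smul_fst, Prod.fst_add, u1_1, u2_1, u3_1]; norm_num
lemma ctr_2 : ctr.2 = √3 / 6 := by
  simp only [ctr, smul_snd, Prod.snd_add, u1_2, u2_2, u3_2]; ring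

lemma rot_fst (x : Pt) : (rotccw x).1 = ctr.1 - (x.1 - ctr.1) / 2 - √3 / 2 * (x.2 - ctr.2) := rfl
lemma rot_snd (x : Pt) : (rotccw x).2 = ctr.2 + √3 / 2 * (x.1 - ctr.1) - (x.2 - ctr.2) / 2 := rfl

lemma rot_u1 : rotccw u1 = u3 := by
  refine pt_ext ?_ ?_ <;>
    simp only [rot_fst, rot_snd, ctr_1, ctr_2, u1_1, u1_2, u3_1, u3_2]
  · linear_combination (1/12 : ℝ) * h3
  · ring
lemma rot_u2 : rotccw u2 = u1 := by
  refine pt_ext ?_ ?_ <;>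
    simp only [rot_fst, rot_snd, ctr_1, ctr_2, u1_1, u1_2, u2_1, u2_2]
  · linear_combination (-1/6 : ℝ) * h3
  · ring
lemma rot_u3 : rotccw u3 = u2 := by
  refine pt_ext ?_ ?_ <;>
    simp only [rot_fst, rot_snd, ctr_1, ctr_2, u2_1, u2_2, u3_1, u3_2]
  · linear_combination (1/12 : ℝ) * h3
  · ring

lemma rot_half (x : Pt) : rotccw ((2:ℝ)⁻¹ • x) = (2:ℝ)⁻¹ • (u3 + rotccw x) := by
  refine pt_ext ?_ ?_ <;>
    simp only [rot_fst, rot_snd, ctr_1, ctr_2, smul_fst, smul_snd, Prod.fst_add, Prod.snd_add,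
      u3_1, u3_2]
  · linear_combination (1/24 : ℝ) * h3
  · ring
lemma rot_top (x : Pt) : rotccw ((2:ℝ)⁻¹ • (u2 + x)) = (2:ℝ)⁻¹ • rotccw x := by
  refine pt_ext ?_ ?_ <;>
    simp only [rot_fst, rot_snd, ctr_1, ctr_2, smul_fst, smul_snd, Prod.fst_add, Prod.snd_add,
      u2_1, u2_2]
  · linear_combination (-1/12 : ℝ) * h3
  · ring
lemma rot_right (x : Pt) : rotccw ((2:ℝ)⁻¹ • (u3 + x)) = (2:ℝ)⁻¹ • (u2 + rotccw x) := by
  refine pt_ext ?_ ?_ <;>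
    simp only [rot_fst, rot_snd, ctr_1, ctr_2, smul_fst, smul_snd, Prod.fst_add, Prod.snd_add,
      u2_1, u2_2, u3_1, u3_2]
  · linear_combination (1/24 : ℝ) * h3
  · ring

lemma rot3 (x : Pt) : rotccw (rotccw (rotccw x)) = x := by
  refine pt_ext ?_ ?_ <;>
    simp only [rot_fst, rot_snd, ctr_1, ctr_2]
  · linear_combination ((-3/16 : ℝ) + (3/8) * x.1 + (1/8) * √3 * x.2 + (-1/48) * (√3 * √3)) * h3
  · linear_combination ((3/8 : ℝ) * x.2 - (1/8) * √3 * x.1) * h3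

lemma rot_inj : Function.Injective rotccw := fun a b h => by
  have h' : rotccw (rotccw (rotccw a)) = rotccw (rotccw (rotccw b)) := by rw [h]
  rwa [rot3, rot3] at h'

lemma ed_rot : ∀ n (a b : Pt), (a, b) ∈ Ed n →
    ((rotccw a, rotccw b) ∈ Ed n ∨ (rotccw b, rotccw a) ∈ Ed n) := by
  intro n
  induction n with
  | zero =>
    intro a b h
    simp only [Ed_zero, Set.mem_insert_iff, Set.mem_singleton_iff, Prod.mk.injEq] at h
    rcases h with ⟨rfl, rfl⟩ | ⟨rfl, rfl⟩ | ⟨rfl, rfl⟩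
    · rw [rot_u1, rot_u2]; exact Or.inr (Or.inr (Or.inr rfl))
    · rw [rot_u2, rot_u3]; exact Or.inl (Or.inl rfl)
    · rw [rot_u1, rot_u3]; exact Or.inr (Or.inr (Or.inl rfl))
  | succ n ih =>
    intro a b h
    obtain ⟨a0, b0, h0, hc⟩ := ed_cases h
    rcases hc with ⟨rfl, rfl⟩ | ⟨rfl, rfl⟩ | ⟨rfl, rfl⟩
    · rw [rot_half, rot_half]
      rcases ih a0 b0 h0 with h' | h'
      · exact Or.inl (ed_right h')
      · exact Or.inr (ed_right h')
    · rw [rot_top, rot_top]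
      rcases ih a0 b0 h0 with h' | h'
      · exact Or.inl (ed_left h')
      · exact Or.inr (ed_left h')
    · rw [rot_right, rot_right]
      rcases ih a0 b0 h0 with h' | h'
      · exact Or.inl (ed_top h')
      · exact Or.inr (ed_top h')

lemma v_rot : ∀ n (x : Pt), x ∈ V n → rotccw x ∈ V n := by
  intro n
  induction n with
  | zero =>
    intro x h
    rcases h with rfl | rfl | rfl
    · rw [rot_u1]; exact Or.inr (Or.inr rfl)
    · rw [rot_u2]; exact Or.inl rfl
    · rw [rot_u3]; exact Or.inr (Or.inl rfl)
  | succ n ih =>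
    intro x h
    obtain ⟨y, hy, hc⟩ := v_cases h
    rcases hc with rfl | rfl | rfl
    · rw [rot_half]; exact mem_V_right (ih _ hy)
    · rw [rot_top]; exact mem_V_left (ih _ hy)
    · rw [rot_right]; exact mem_V_top (ih _ hy)

lemma adj_rot {n : ℕ} {x y : Pt} (h : (SG n).Adj x y) :
    (SG n).Adj (rotccw x) (rotccw y) := by
  constructor
  · rcases h.1 with h' | h'
    · exact ed_rot n _ _ h'
    · exact (ed_rot n _ _ h').symm
  · exact fun he => h.2 (rot_inj he)

def homRot (n : ℕ) : SG n →g SG n where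
  toFun := rotccw
  map_rel' := adj_rot

lemma dist_rot_le (n : ℕ) (x y : Pt) :
    (SG n).dist (rotccw x) (rotccw y) ≤ (SG n).dist x y := by
  by_cases hr : (SG n).Reachable x y
  · obtain ⟨w, hw⟩ := hr.exists_walk_length_eq_dist
    calc (SG n).dist (rotccw x) (rotccw y) ≤ (w.map (homRot n)).length :=
          SimpleGraph.dist_le _
    _ = w.length := SimpleGraph.Walk.length_map _ _
    _ = (SG n).dist x y := hw
  · have hnr : ¬ (SG n).Reachable (rotccw x) (rotccw y) := by
      intro ⟨w⟩
      exact hr ⟨((w.map (homRot n)).map (homRot n)).copy (rot3 x) (rot3 y)⟩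
    rw [SimpleGraph.dist_eq_zero_of_not_reachable hnr]
    exact Nat.zero_le _

lemma dist_rot (n : ℕ) (x y : Pt) :
    (SG n).dist (rotccw x) (rotccw y) = (SG n).dist x y := by
  refine le_antisymm (dist_rot_le n x y) ?_
  have h2 := dist_rot_le n (rotccw x) (rotccw y)
  have h3' := dist_rot_le n (rotccw (rotccw x)) (rotccw (rotccw y))
  rw [rot3, rot3] at h3'
  omega

lemma dcorner_rot (n : ℕ) (x : Pt) : dcorner n (rotccw x) = dcorner n x := by
  have e1 : (SG n).dist (rotccw x) u1 = (SG n).dist x u2 := by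
    rw [← rot_u2]; exact dist_rot n x u2
  have e2 : (SG n).dist (rotccw x) u2 = (SG n).dist x u3 := by
    rw [← rot_u3]; exact dist_rot n x u3
  have e3 : (SG n).dist (rotccw x) u3 = (SG n).dist x u1 := by
    rw [← rot_u1]; exact dist_rot n x u1
  simp only [dcorner, gdist]
  rw [e1, e2, e3]
  omega

lemma adj_rot_iff {n : ℕ} {x y : Pt} :
    (SG n).Adj (rotccw x) y ↔ (SG n).Adj x (rotccw (rotccw y)) := by
  constructor
  · intro h
    have h' := adj_rot (adj_rot h)
    rwa [rot3] at h'
  · intro h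
    have h' := adj_rot h
    rwa [rot3] at h'

lemma lap_rot_nbhd {n : ℕ} {x a b c d : Pt}
    (hadj : ∀ y, (SG n).Adj x y ↔ (y = a ∨ y = b ∨ y = c ∨ y = d)) :
    ∀ y, (SG n).Adj (rotccw x) y ↔
      (y = rotccw a ∨ y = rotccw b ∨ y = rotccw c ∨ y = rotccw d) := by
  intro y
  rw [adj_rot_iff, hadj]
  constructor
  · rintro (h | h | h | h)
    · exact Or.inl (by rw [← rot3 y, h])
    · exact Or.inr (Or.inl (by rw [← rot3 y, h]))
    · exact Or.inr (Or.inr (Or.inl (by rw [← rot3 y, h])))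
    · exact Or.inr (Or.inr (Or.inr (by rw [← rot3 y, h])))
  · rintro (rfl | rfl | rfl | rfl)
    · exact Or.inl (rot3 _)
    · exact Or.inr (Or.inl (rot3 _))
    · exact Or.inr (Or.inr (Or.inl (rot3 _)))
    · exact Or.inr (Or.inr (Or.inr (rot3 _)))

lemma lap_from_nbhd {n : ℕ} {x a b c d : Pt}
    (hadj : ∀ y, (SG n).Adj x y ↔ (y = a ∨ y = b ∨ y = c ∨ y = d))
    (hab : a ≠ b) (hac : a ≠ c) (had : a ≠ d) (hbc : b ≠ c) (hbd : b ≠ d) (hcd : c ≠ d)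
    (f : Pt → ℝ) :
    lap n f x = 4 * f x - (f a + (f b + (f c + f d))) := by
  classical
  have hs : ∀ y, (SG n).Adj x y ↔ y ∈ ({a, b, c, d} : Finset Pt) := by
    intro y; rw [hadj]
    simp [Finset.mem_insert, Finset.mem_singleton]
  rw [lap_eval _ hs,
    Finset.sum_insert (by
      simp only [Finset.mem_insert, Finset.mem_singleton]; push_neg
      exact ⟨hab, hac, had⟩),
    Finset.sum_insert (by
      simp only [Finset.mem_insert, Finset.mem_singleton]; push_neg
      exact ⟨hbc, hbd⟩),
    Finset.sum_insert (by simpa using hcd), Finset.sum_singleton]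

lemma lap_pm2 (k : ℕ) :
    lap (k+1) (fun y => (dcorner (k+1) y : ℝ)) (rotccw pm) = 2 := by
  rw [lap_from_nbhd (lap_rot_nbhd (nbhd_pm k))
    (rot_inj.ne (q_ne_12 k)) (rot_inj.ne (q_ne_13 k)) (rot_inj.ne (q_ne_14 k))
    (rot_inj.ne (q_ne_23 k)) (rot_inj.ne (q_ne_24 k)) (rot_inj.ne (q_ne_34 k))]
  simp only [dcorner_rot, dcorner_pm, dcorner_q1, dcorner_q2, dcorner_q3, dcorner_q4]
  rw [hvr, hvr']
  ring

lemma lap_pm3 (k : ℕ) :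
    lap (k+1) (fun y => (dcorner (k+1) y : ℝ)) (rotccw (rotccw pm)) = 2 := by
  rw [lap_from_nbhd (lap_rot_nbhd (lap_rot_nbhd (nbhd_pm k)))
    (rot_inj.ne (rot_inj.ne (q_ne_12 k))) (rot_inj.ne (rot_inj.ne (q_ne_13 k)))
    (rot_inj.ne (rot_inj.ne (q_ne_14 k))) (rot_inj.ne (rot_inj.ne (q_ne_23 k)))
    (rot_inj.ne (rot_inj.ne (q_ne_24 k))) (rot_inj.ne (rot_inj.ne (q_ne_34 k)))]
  simp only [dcorner_rot, dcorner_pm, dcorner_q1, dcorner_q2, dcorner_q3, dcorner_q4]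
  rw [hvr, hvr']
  ring

lemma lap_pm1 (k : ℕ) :
    lap (k+1) (fun y => (dcorner (k+1) y : ℝ)) pm = 2 := lap_pm k

/-! ### The three theorem points -/

lemma hA : (2:ℝ)⁻¹ • (u1 + u2) = pm := by
  refine pt_ext ?_ ?_ <;>
    simp only [pm, smul_fst, smul_snd, Prod.fst_add, Prod.snd_add, u1_1, u1_2] <;> ring

lemma hB : rotccw pm = (2:ℝ)⁻¹ • (u1 + u3) := by
  have h := rot_half u2
  rw [rot_u2] at h
  refine (h.trans ?_ :)
  refine congrArg _ (pt_ext ?_ ?_) <;>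
    simp only [Prod.fst_add, Prod.snd_add, u1_1, u1_2, u3_1, u3_2] <;> ring

lemma hC : rotccw (rotccw pm) = (2:ℝ)⁻¹ • (u2 + u3) := by
  have h1 : rotccw pm = (2:ℝ)⁻¹ • (u3 + u1) := by
    have h := rot_half u2
    rwa [rot_u2] at h
  rw [h1, rot_right, rot_u1]

lemma notcorner2 : (2:ℝ)⁻¹ • (u1 + u3) ∉ corners := by
  intro h
  rcases h with h | h | h
  · have := congrArg Prod.fst h
    simp only [smul_fst, Prod.fst_add, u1_1, u3_1] at this
    norm_num at this
  · have := congrArg Prod.snd h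
    simp only [smul_snd, Prod.snd_add, u1_2, u2_2, u3_2] at this
    nlinarith [s3_pos]
  · have := congrArg Prod.fst h
    simp only [smul_fst, Prod.fst_add, u1_1, u3_1] at this
    norm_num at this

lemma notcorner3 : (2:ℝ)⁻¹ • (u2 + u3) ∉ corners := by
  intro h
  rcases h with h | h | h
  · have := congrArg Prod.snd h
    simp only [smul_snd, Prod.snd_add, u1_2, u2_2, u3_2] at this
    nlinarith [s3_pos]
  · have := congrArg Prod.fst h
    simp only [smul_fst, Prod.fst_add, u2_1, u3_1] at this
    norm_num at this
  · have := congrArg Prod.snd h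
    simp only [smul_snd, Prod.snd_add, u2_2, u3_2] at this
    nlinarith [s3_pos]

end SGAux

/-- For every `m ≥ 2`, the side midpoints `p_1=(u_1+u_2)/2`, `p_2=(u_1+u_3)/2`,
`p_3=(u_2+u_3)/2` are non-corner vertices of `SG_m` and `Δ_m d_m(p_i) = 2` for each `i`. -/
theorem lap_dcorner_at_midpoints (m : ℕ) (hm : 2 ≤ m) :
    ((2:ℝ)⁻¹ • (u1 + u2) ∈ V m ∧ (2:ℝ)⁻¹ • (u1 + u2) ∉ corners) ∧
    ((2:ℝ)⁻¹ • (u1 + u3) ∈ V m ∧ (2:ℝ)⁻¹ • (u1 + u3) ∉ corners) ∧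
    ((2:ℝ)⁻¹ • (u2 + u3) ∈ V m ∧ (2:ℝ)⁻¹ • (u2 + u3) ∉ corners) ∧
    lap m (fun y => (dcorner m y : ℝ)) ((2:ℝ)⁻¹ • (u1 + u2)) = 2 ∧
    lap m (fun y => (dcorner m y : ℝ)) ((2:ℝ)⁻¹ • (u1 + u3)) = 2 ∧
    lap m (fun y => (dcorner m y : ℝ)) ((2:ℝ)⁻¹ • (u2 + u3)) = 2 := by
  obtain ⟨k, rfl⟩ : ∃ k, m = k + 1 := ⟨m - 1, by omega⟩
  refine ⟨⟨?_, ?_⟩, ⟨?_, ?_⟩, ⟨?_, ?_⟩, ?_, ?_, ?_⟩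
  · rw [SGAux.hA]; exact SGAux.pm_mem k
  · rw [SGAux.hA]; exact SGAux.pm_not_corner
  · rw [← SGAux.hB]; exact SGAux.v_rot _ _ (SGAux.pm_mem k)
  · exact SGAux.notcorner2
  · rw [← SGAux.hC]; exact SGAux.v_rot _ _ (SGAux.v_rot _ _ (SGAux.pm_mem k))
  · exact SGAux.notcorner3
  · rw [SGAux.hA]; exact SGAux.lap_pm1 k
  · rw [← SGAux.hB]; exact SGAux.lap_pm2 k
  · rw [← SGAux.hC]; exact SGAux.lap_pm3 k
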